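/- Let X be a real random variable with X ≤ 1 almost surely and E[X] ≥ 0, and let κ ∈ (0, 1/2]. Then either (i) Pr[X < -2κ] ≤ 3/4, or (ii) there exists a nonnegative integer i ≤ ⌈log₂(1/κ)⌉ - 1 such that Pr[X ≥ 2^i κ] ≥ 1/(2^{i+2} ⌈log₂(1/κ)⌉). -/

import Mathlib

open MeasureTheory

/-- Dichotomy for a random variable `X ≤ 1` a.s. with `E[X] ≥ 0` and `κ ∈ (0,1/2]`:
either `Pr[X < -2κ] ≤ 3/4`, or some dyadic level `i ≤ ⌈log₂(1/κ)⌉ - 1` satisfies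
`Pr[X ≥ 2^i κ] ≥ 1/(2^(i+2) ⌈log₂(1/κ)⌉)`. -/
theorem stmt_1 {Ω : Type*} [MeasurableSpace Ω] (μ : Measure Ω) [IsProbabilityMeasure μ]
    (X : Ω → ℝ) (hX : Measurable X) (hle : ∀ᵐ ω ∂μ, X ω ≤ 1)
    (hint : Integrable X μ) (hE : 0 ≤ ∫ ω, X ω ∂μ)
    (κ : ℝ) (hκ0 : 0 < κ) (hκ1 : κ ≤ 1/2) :
    (μ {ω | X ω < -2*κ}).toReal ≤ 3/4 ∨
    ∃ i : ℕ, (i : ℤ) ≤ ⌈Real.logb 2 (1/κ)⌉ - 1 ∧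
      (μ {ω | X ω ≥ 2^i * κ}).toReal ≥
        1 / (2^(i+2) * ((⌈Real.logb 2 (1/κ)⌉ : ℤ) : ℝ)) := by
  by_contra hcon
  push_neg at hcon
  obtain ⟨hp, hq⟩ := hcon
  set L : ℤ := ⌈Real.logb 2 (1/κ)⌉ with hLdef
  have hκinv : (2:ℝ) ≤ 1/κ := by rw [le_div_iff₀ hκ0]; linarith
  have hlogb1 : (1:ℝ) ≤ Real.logb 2 (1/κ) := by
    rw [Real.le_logb_iff_rpow_le (by norm_num) (by positivity)]
    simpa using hκinv
  have hL1 : 1 ≤ L := by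
    have h1 : (1:ℝ) ≤ (L:ℝ) := le_trans hlogb1 (Int.le_ceil _)
    exact_mod_cast h1
  set n : ℕ := L.toNat with hndef
  have hnL : (n : ℤ) = L := Int.toNat_of_nonneg (by omega)
  have hnLR : (n : ℝ) = (L : ℝ) := by exact_mod_cast hnL
  have hn1 : 1 ≤ n := by omega
  have hLR0 : (0:ℝ) < (L:ℝ) := by exact_mod_cast (by omega : (0:ℤ) < L)
  -- 2^n * κ ≥ 1
  have h2n : (1:ℝ) ≤ 2^n * κ := by
    have hle2 : Real.logb 2 (1/κ) ≤ (n:ℝ) := le_trans (Int.le_ceil _) (by rw [hnLR])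
    rw [Real.logb_le_iff_le_rpow (by norm_num) (by positivity)] at hle2
    rw [Real.rpow_natCast] at hle2
    calc (1:ℝ) = (1/κ) * κ := by field_simp
      _ ≤ 2^n * κ := by nlinarith
  -- sets
  set A : Set Ω := {ω | X ω < -2*κ} with hAdef
  have hA : MeasurableSet A := hX measurableSet_Iio
  set B : ℕ → Set Ω := fun i => {ω | X ω ≥ 2^i * κ} with hBdef
  have hB : ∀ i, MeasurableSet (B i) := fun i => hX measurableSet_Ici
  have hI1 : Integrable (fun ω => A.indicator (fun _ => -2*κ) ω) μ :=
    (integrable_const _).indicator hA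
  have hI2 : Integrable (fun ω => Aᶜ.indicator (fun _ => κ) ω) μ :=
    (integrable_const _).indicator hA.compl
  have hI3 : Integrable
      (fun ω => ∑ i ∈ Finset.range n, (B i).indicator (fun _ => 2^i*κ) ω) μ :=
    integrable_finset_sum _ (fun i _ => (integrable_const _).indicator (hB i))
  have hI12 : Integrable
      (fun ω => A.indicator (fun _ => -2*κ) ω + Aᶜ.indicator (fun _ => κ) ω) μ := hI1.add hI2
  set f : Ω → ℝ := fun ω => A.indicator (fun _ => -2*κ) ω + Aᶜ.indicator (fun _ => κ) ω
      + ∑ i ∈ Finset.range n, (B i).indicator (fun _ => 2^i*κ) ω with hfdef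
  have hfint : Integrable f μ := hI12.add hI3
  -- pointwise bound
  have hXf : ∀ᵐ ω ∂μ, X ω ≤ f ω := by
    filter_upwards [hle] with ω hω
    have hSnn : ∀ (m : ℕ), 0 ≤ ∑ i ∈ Finset.range m, (B i).indicator (fun _ => 2^i*κ) ω := by
      intro m
      apply Finset.sum_nonneg
      intro i _
      exact Set.indicator_nonneg (fun _ _ => by positivity) ω
    rcases lt_or_ge (X ω) (-2*κ) with h1 | h1
    · have hmem : ω ∈ A := h1
      simp only [hfdef, Set.indicator_of_mem hmem]
      have := hSnn n
      have : (0:ℝ) ≤ Aᶜ.indicator (fun _ => κ) ω :=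
        Set.indicator_nonneg (fun _ _ => le_of_lt hκ0) ω
      nlinarith [hSnn n]
    · have hmem : ω ∉ A := by simp [hAdef]; linarith
      have hmemc : ω ∈ Aᶜ := hmem
      simp only [hfdef, Set.indicator_of_notMem hmem, Set.indicator_of_mem hmemc]
      rcases lt_or_ge (X ω) κ with h2 | h2
      · linarith [hSnn n]
      · -- X ω ≥ κ
        set P : ℕ → Prop := fun i => 2^i * κ ≤ X ω with hPdef
        have hP0 : P 0 := by simpa [hPdef] using h2
        set j : ℕ := Nat.findGreatest P (n-1) with hjdef
        have hPj : P j := Nat.findGreatest_spec (Nat.zero_le _) hP0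
        have hjle : j ≤ n - 1 := Nat.findGreatest_le _
        have hkey : X ω ≤ 2^(j+1) * κ := by
          by_cases hj : j + 1 ≤ n - 1
          · have hnot : ¬ P (j+1) :=
              Nat.findGreatest_is_greatest (by omega) hj
            simp only [hPdef] at hnot
            linarith [not_le.mp hnot]
          · have hjn : j + 1 = n := by omega
            rw [hjn]
            linarith
        have hsub : Finset.range (j+1) ⊆ Finset.range n := by
          apply Finset.range_subset_range.2; omega
        have hmemB : ∀ i ∈ Finset.range (j+1), ω ∈ B i := by
          intro i hi
          simp only [Finset.mem_range] at hi
          have : (2:ℝ)^i ≤ 2^j := pow_le_pow_right₀ (by norm_num) (by omega)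
          have : (2:ℝ)^i * κ ≤ 2^j * κ := by nlinarith
          simp only [hBdef, Set.mem_setOf_eq, ge_iff_le]
          exact le_trans this hPj
        have hsum1 : ∑ i ∈ Finset.range (j+1), (B i).indicator (fun _ => 2^i*κ) ω
            = ∑ i ∈ Finset.range (j+1), 2^i*κ := by
          apply Finset.sum_congr rfl
          intro i hi
          exact Set.indicator_of_mem (hmemB i hi) _
        have hgeom : ∑ i ∈ Finset.range (j+1), (2:ℝ)^i * κ = (2^(j+1) - 1) * κ := by
          rw [← Finset.sum_mul, geom_sum_eq (by norm_num : (2:ℝ) ≠ 1)]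
          ring_nf
        have hsum2 : ∑ i ∈ Finset.range (j+1), (B i).indicator (fun _ => 2^i*κ) ω
            ≤ ∑ i ∈ Finset.range n, (B i).indicator (fun _ => 2^i*κ) ω := by
          apply Finset.sum_le_sum_of_subset_of_nonneg hsub
          intro i _ _
          exact Set.indicator_nonneg (fun _ _ => by positivity) ω
        rw [hsum1, hgeom] at hsum2
        nlinarith
  -- compute integral of f
  have hintf : ∫ ω, f ω ∂μ = (μ A).toReal * (-2*κ) + (μ Aᶜ).toReal * κ
      + ∑ i ∈ Finset.range n, (μ (B i)).toReal * (2^i*κ) := by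
    simp only [hfdef]
    rw [integral_add hI12 hI3, integral_add hI1 hI2,
      integral_finset_sum _ (fun i _ => (integrable_const _).indicator (hB i))]
    rw [integral_indicator_const _ hA, integral_indicator_const _ hA.compl]
    simp only [integral_indicator_const _ (hB _), smul_eq_mul]
    rfl
  have hmono := integral_mono_ae hint hfint hXf
  -- probability facts
  have hAc : (μ Aᶜ).toReal = 1 - (μ A).toReal := by
    rw [prob_compl_eq_one_sub hA, ENNReal.toReal_sub_of_le prob_le_one (by simp)]
    simp
  -- bound the sum
  have hsumbd : ∑ i ∈ Finset.range n, (μ (B i)).toReal * (2^i*κ) ≤ κ/4 := by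
    have hterm : ∀ i ∈ Finset.range n, (μ (B i)).toReal * (2^i*κ) ≤ κ/(4*(L:ℝ)) := by
      intro i hi
      simp only [Finset.mem_range] at hi
      have hiq := hq i (by omega)
      have h2i : (0:ℝ) < 2^i := by positivity
      have hb : (μ (B i)).toReal ≤ 1/(2^(i+2) * (L:ℝ)) := le_of_lt hiq
      have heq : (1/((2:ℝ)^(i+2) * (L:ℝ))) * (2^i*κ) = κ/(4*(L:ℝ)) := by
        field_simp
        ring
      calc (μ (B i)).toReal * (2^i*κ) ≤ (1/((2:ℝ)^(i+2) * (L:ℝ))) * (2^i*κ) := by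
            apply mul_le_mul_of_nonneg_right hb (by positivity)
        _ = κ/(4*(L:ℝ)) := heq
    calc ∑ i ∈ Finset.range n, (μ (B i)).toReal * (2^i*κ)
        ≤ ∑ i ∈ Finset.range n, κ/(4*(L:ℝ)) := Finset.sum_le_sum hterm
      _ = n * (κ/(4*(L:ℝ))) := by rw [Finset.sum_const, Finset.card_range]; ring
      _ = κ/4 := by rw [hnLR]; field_simp
  rw [hintf, hAc] at hmono
  have hfinal : (0:ℝ) ≤ (μ A).toReal * (-2*κ) + (1 - (μ A).toReal) * κ + κ/4 :=
    le_trans hE (le_trans hmono (by linarith))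
  nlinarith [hp, hκ0]
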